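/- The QEALM clause condition is preserved by Robinson's factoring rule: if the clause C ∨ p(t_1,...,t_n) ∨ p(s_1,...,s_n) satisfies the QEALM clause condition and σ is a most general unifier of p(t_1,...,t_n) and p(s_1,...,s_n), then the factor Cσ ∨ p(t_1,...,t_n)σ also satisfies the QEALM clause condition. -/

import Mathlib

/-- Terms over variables `V` and constant symbols `K`
(Bernays–Schönfinkel: the only function symbols are constants). -/
inductive Trm (V K : Type) : Type where
  | var : V → Trm V K
  | const : K → Trm V K
deriving DecidableEq

/-- A first-order literal (no equality): a polarity, a predicate symbol
and a list of argument terms. -/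
structure Lit (V K P : Type) : Type where
  pol : Bool
  pred : P
  args : List (Trm V K)
deriving DecidableEq

/-- A clause is a (finite) set of literals, read disjunctively. -/
abbrev Clause (V K P : Type) := Finset (Lit V K P)

/-- A CNF is a list of clauses, read conjunctively,
with all variables universally quantified. -/
abbrev CNF (V K P : Type) := List (Clause V K P)

variable {V K P : Type}

/-- The argument of a literal at the (1-based) position `i`. -/
def Lit.argAt (l : Lit V K P) : ℕ → Option (Trm V K)
  | 0 => none
  | i + 1 => l.args[i]?

/-- Variable `u` occurs at argument position `i` of the literal `l`. -/
def Lit.varAt (l : Lit V K P) (u : V) (i : ℕ) : Prop := l.argAt i = some (Trm.var u)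

/-- Variable `u` occurs in the literal `l`. -/
def Lit.hasVar (l : Lit V K P) (u : V) : Prop := ∃ i, l.varAt u i

/-- `i` is the least argument position at which `u` occurs in `l`. -/
def Lit.firstOccAt (l : Lit V K P) (u : V) (i : ℕ) : Prop :=
  l.varAt u i ∧ ∀ j, l.varAt u j → i ≤ j

/-- The QEALM clause condition: whenever a variable `u` occurs in several
literals of the clause, the least position at which it occurs is the same in
all these literals, and these literals agree on all argument positions up to
(and including) that one (a shared initial segment). -/
def QEALMClause (C : Clause V K P) : Prop :=
  ∀ (u : V), ∀ l₁ ∈ C, ∀ l₂ ∈ C, l₁.hasVar u → l₂.hasVar u →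
    ∃ i, l₁.firstOccAt u i ∧ l₂.firstOccAt u i ∧ ∀ j ≤ i, l₁.argAt j = l₂.argAt j

/-- A CNF is in the QEALM fragment iff every clause satisfies the QEALM clause condition. -/
def QEALM (φ : CNF V K P) : Prop := ∀ C ∈ φ, QEALMClause C

/-- A first-order structure for the signature `(K, P)` (no equality). -/
structure Model (K P : Type) : Type 1 where
  Dom : Type
  dne : Nonempty Dom
  constVal : K → Dom
  predVal : P → List Dom → Prop

/-- Value of a term in a model under a variable assignment. -/
def Trm.val (M : Model K P) (ρ : V → M.Dom) : Trm V K → M.Dom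
  | .var u => ρ u
  | .const c => M.constVal c

/-- Truth of a literal in a model under a variable assignment. -/
def Lit.holds (M : Model K P) (ρ : V → M.Dom) (l : Lit V K P) : Prop :=
  if l.pol then M.predVal l.pred (l.args.map (Trm.val M ρ))
  else ¬ M.predVal l.pred (l.args.map (Trm.val M ρ))

/-- Truth of a clause (a disjunction of literals). -/
def Clause.holds (M : Model K P) (ρ : V → M.Dom) (C : Clause V K P) : Prop :=
  ∃ l ∈ C, l.holds M ρ

/-- First-order satisfiability (without equality) of a universally quantified CNF. -/
def CNF.Satisfiable (φ : CNF V K P) : Prop :=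
  ∃ M : Model K P, ∀ ρ : V → M.Dom, ∀ C ∈ φ, C.holds M ρ

/-- Applying a substitution to a term. -/
def Trm.subst (σ : V → Trm V K) : Trm V K → Trm V K
  | .var u => σ u
  | .const c => .const c

/-- Applying a substitution to a literal. -/
def Lit.subst (σ : V → Trm V K) (l : Lit V K P) : Lit V K P :=
  ⟨l.pol, l.pred, l.args.map (Trm.subst σ)⟩

/-- Applying a substitution to a clause. -/
def Clause.subst [DecidableEq V] [DecidableEq K] [DecidableEq P]
    (σ : V → Trm V K) (C : Clause V K P) : Clause V K P :=
  C.image (Lit.subst σ)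

/-- Applying a substitution to a CNF. -/
def CNF.subst [DecidableEq V] [DecidableEq K] [DecidableEq P]
    (σ : V → Trm V K) (φ : CNF V K P) : CNF V K P :=
  φ.map (Clause.subst σ)

/-- An outer variable of a clause: a variable appearing in every literal of the clause. -/
def OuterVar (C : Clause V K P) (u : V) : Prop := ∀ l ∈ C, l.hasVar u

/-- `i` is the least position of an occurrence of `u` in any literal of `C`. -/
def LeastOccIn (C : Clause V K P) (u : V) (i : ℕ) : Prop :=
  (∃ l ∈ C, l.varAt u i) ∧ ∀ j, (∃ l ∈ C, l.varAt u j) → i ≤ j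

/-- `i` is an outer position of the clause `C`. -/
def OuterPosClause (C : Clause V K P) (i : ℕ) : Prop :=
  ∃ u : V, OuterVar C u ∧ LeastOccIn C u i

/-- `i` is a neutral position of the clause `C`: some term `t`, a constant or an
outer variable of `C`, occupies the `i`-th argument of every literal of `C`. -/
def NeutralPos (C : Clause V K P) (i : ℕ) : Prop :=
  ∃ t : Trm V K,
    ((∃ c, t = Trm.const c) ∨ (∃ u, t = Trm.var u ∧ OuterVar C u)) ∧
    ∀ l ∈ C, l.argAt i = some t

/-- `i` is an outer position of the CNF `φ`: an outer position of some clause and a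
neutral position of every clause. -/
def OuterPosCNF (φ : CNF V K P) (i : ℕ) : Prop :=
  (∃ C ∈ φ, OuterPosClause C i) ∧ ∀ D ∈ φ, NeutralPos D i

/-- Variable `u` occurs at argument position `i` in some literal of `φ`. -/
def VarOccursAt (φ : CNF V K P) (u : V) (i : ℕ) : Prop :=
  ∃ C ∈ φ, ∃ l ∈ C, l.varAt u i

/-- `σ` is the substitution that replaces every variable occurring at an argument
position `i` that is an outer position of `φ` by the constant `c i`, and leaves
all other variables unchanged. -/
def IsOuterSubst (φ : CNF V K P) (c : ℕ → K) (σ : V → Trm V K) : Prop :=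
  (∀ u i, OuterPosCNF φ i → VarOccursAt φ u i → σ u = Trm.const (c i)) ∧
  (∀ u, (¬ ∃ i, OuterPosCNF φ i ∧ VarOccursAt φ u i) → σ u = Trm.var u)

/-- A clause is inseparable if it is a single literal or some variable occurs in
every literal of the clause. -/
def InsepClause (C : Clause V K P) : Prop :=
  (∃ l, C = {l}) ∨ ∃ u : V, ∀ l ∈ C, l.hasVar u

/-- `Kc` is a component of a clause `C`: a non-empty inseparable subclause of `C`
closed under sharing variables with literals of `C`. -/
def IsComponent (Kc C : Clause V K P) : Prop :=
  Kc.Nonempty ∧ Kc ⊆ C ∧ InsepClause Kc ∧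
    ∀ a ∈ Kc, ∀ b ∈ C, (∃ u : V, a.hasVar u ∧ b.hasVar u) → b ∈ Kc

/-- All variables shared between `l₁` and `l₂` occur as arguments in positions `≤ m`. -/
def SharesUpTo (l₁ l₂ : Lit V K P) (m : ℕ) : Prop :=
  ∀ u : V, l₁.hasVar u → l₂.hasVar u →
    (∃ j ≤ m, l₁.varAt u j) ∧ (∃ j ≤ m, l₂.varAt u j)

/-- `i` is a fork index of `φ`: for some clause `C` of `φ` and literals `l₁, l₂` of
`C` (not necessarily distinct), `i` is the minimal value such that every variable
shared between `l₁` and `l₂` occurs at some argument position `≤ i`.  In particular,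
`0` is a fork index if some such pair shares no variables. -/
def ForkIndex (φ : CNF V K P) (i : ℕ) : Prop :=
  ∃ C ∈ φ, ∃ l₁ ∈ C, ∃ l₂ ∈ C, IsLeast {m | SharesUpTo l₁ l₂ m} i

/-- `σ` unifies the two argument lists `t` and `s` (i.e. the two atoms
`p(t₁,…,tₙ)` and `p(s₁,…,sₙ)`). -/
def Unifies (σ : V → Trm V K) (t s : List (Trm V K)) : Prop :=
  t.map (Trm.subst σ) = s.map (Trm.subst σ)

/-- `σ` is a most general unifier of the atoms with argument lists `t` and `s`:
it unifies them, and every unifier factors through it. -/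
def IsMGU (σ : V → Trm V K) (t s : List (Trm V K)) : Prop :=
  Unifies σ t s ∧
    ∀ τ : V → Trm V K, Unifies τ t s →
      ∃ δ : V → Trm V K, ∀ v, Trm.subst δ (σ v) = τ v

/-- The two clauses share no variables. -/
def VarDisjoint (C D : Clause V K P) : Prop :=
  ∀ u : V, (∃ l ∈ C, l.hasVar u) → ¬ ∃ l ∈ D, l.hasVar u

section AuxStatement9
variable {V K P : Type}

lemma Lit.argAt_subst (σ : V → Trm V K) (l : Lit V K P) (j : ℕ) :
    (Lit.subst σ l).argAt j = (l.argAt j).map (Trm.subst σ) := by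
  cases j with
  | zero => rfl
  | succ i => simp [Lit.argAt, Lit.subst]

lemma Lit.varAt_subst {σ : V → Trm V K} {l : Lit V K P} {u : V} {j : ℕ} :
    (Lit.subst σ l).varAt u j ↔ ∃ w, l.varAt w j ∧ σ w = Trm.var u := by
  unfold Lit.varAt
  rw [Lit.argAt_subst]
  constructor
  · intro h
    obtain ⟨a, ha, h2⟩ : ∃ a, l.argAt j = some a ∧ Trm.subst σ a = Trm.var u := by
      cases hb : l.argAt j with
      | none => rw [hb] at h; exact absurd h (by simp)
      | some a =>
        rw [hb] at h
        simp only [Option.map_some] at h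
        exact ⟨a, rfl, Option.some.inj h⟩
    cases a with
    | var w => exact ⟨w, ha, h2⟩
    | const c => simp [Trm.subst] at h2
  · rintro ⟨w, hw, hσ⟩
    rw [hw]
    simp [Trm.subst, hσ]

lemma Lit.exists_firstOccAt {l : Lit V K P} {u : V} (h : l.hasVar u) :
    ∃ i, l.firstOccAt u i :=
  ⟨sInf {i | l.varAt u i}, Nat.sInf_mem h, fun _ hj => Nat.sInf_le hj⟩

lemma Lit.firstOccAt_unique {l : Lit V K P} {u : V} {i i' : ℕ}
    (h : l.firstOccAt u i) (h' : l.firstOccAt u i') : i = i' :=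
  le_antisymm (h.2 _ h'.1) (h'.2 _ h.1)

end AuxStatement9

/-- Robinson's factoring rule preserves the QEALM clause
condition: if the clause `C ∨ p(t₁,…,tₙ) ∨ p(s₁,…,sₙ)` satisfies the QEALM
clause condition and `σ` is a most general unifier of `p(t₁,…,tₙ)` and
`p(s₁,…,sₙ)`, then the factor `Cσ ∨ p(t₁,…,tₙ)σ` also satisfies the QEALM
clause condition. -/


theorem statement_9 [DecidableEq V] [DecidableEq K] [DecidableEq P]
    (C : Clause V K P) (p : P) (t s : List (Trm V K)) (σ : V → Trm V K)
    (hlen : t.length = s.length)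
    (hq : QEALMClause (insert (⟨true, p, t⟩ : Lit V K P)
            (insert (⟨true, p, s⟩ : Lit V K P) C)))
    (hmgu : IsMGU σ t s) :
    QEALMClause (insert (Lit.subst σ (⟨true, p, t⟩ : Lit V K P))
      (Clause.subst σ C)) := by
  classical
  set L : Lit V K P := ⟨true, p, t⟩ with hLdef
  set M : Lit V K P := ⟨true, p, s⟩ with hMdef
  set D : Clause V K P := insert L (insert M C) with hDdef
  have hLD : L ∈ D := Finset.mem_insert_self _ _
  have hMD : M ∈ D := Finset.mem_insert_of_mem (Finset.mem_insert_self _ _)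
  have hCD : ∀ l ∈ C, l ∈ D := fun l hl =>
    Finset.mem_insert_of_mem (Finset.mem_insert_of_mem hl)
  have hUn : t.map (Trm.subst σ) = s.map (Trm.subst σ) := hmgu.1
  have hMσ : Lit.subst σ M = Lit.subst σ L := by
    simp only [Lit.subst, hLdef, hMdef]
    rw [hUn]
  -- the base pair relation
  set B : Trm V K → Trm V K → Prop :=
    fun a b => ∃ j : ℕ, t[j]? = some a ∧ s[j]? = some b with hBdef
  have hσB : ∀ a b, B a b → Trm.subst σ a = Trm.subst σ b := by
    rintro a b ⟨j, ha, hb⟩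
    have := congrArg (fun (l : List (Trm V K)) => l[j]?) hUn
    simp only [List.getElem?_map, ha, hb, Option.map_some] at this
    exact Option.some.inj this
  have hσG : ∀ a b, Relation.EqvGen B a b → Trm.subst σ a = Trm.subst σ b := by
    intro a b h
    induction h with
    | rel a b h => exact hσB a b h
    | refl a => rfl
    | symm a b h ih => exact ih.symm
    | trans a b c h1 h2 ih1 ih2 => exact ih1.trans ih2
  -- a canonical unifier
  set τ : V → Trm V K := fun y =>
    if h : ∃ c, Relation.EqvGen B (Trm.var y) (Trm.const c) then σ y
    else Quot.out (Quot.mk B (Trm.var y)) with hτdef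
  have hmkout : ∀ a : Trm V K, Relation.EqvGen B (Quot.out (Quot.mk B a)) a := by
    intro a
    exact Quot.eqvGen_exact (Quot.out_eq (Quot.mk B a))
  have hσconst : ∀ (y : V) (c : K),
      Relation.EqvGen B (Trm.var y) (Trm.const c) → σ y = Trm.const c :=
    fun y c h => hσG _ _ h
  have hτeq : ∀ (x y : V), Relation.EqvGen B (Trm.var x) (Trm.var y) → τ x = τ y := by
    intro x y hxy
    by_cases hx : ∃ c, Relation.EqvGen B (Trm.var x) (Trm.const c)
    · have hy : ∃ c, Relation.EqvGen B (Trm.var y) (Trm.const c) := by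
        obtain ⟨c, hc⟩ := hx
        exact ⟨c, (hxy.symm _ _).trans _ _ _ hc⟩
      rw [hτdef]
      simp only [dif_pos hx, dif_pos hy]
      exact hσG _ _ hxy
    · have hy : ¬ ∃ c, Relation.EqvGen B (Trm.var y) (Trm.const c) := by
        intro hy
        obtain ⟨c, hc⟩ := hy
        exact hx ⟨c, hxy.trans _ _ _ hc⟩
      rw [hτdef]
      simp only [dif_neg hx, dif_neg hy]
      exact congrArg Quot.out (Quot.eqvGen_sound hxy)
  have hτuni : Unifies τ t s := by
    apply List.ext_getElem?
    intro j
    rw [List.getElem?_map, List.getElem?_map]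
    rcases Nat.lt_or_ge j t.length with hj | hj
    · have hjs : j < s.length := hlen ▸ hj
      obtain ⟨a, ha⟩ : ∃ a, t[j]? = some a := ⟨t[j], List.getElem?_eq_getElem hj⟩
      obtain ⟨b, hb⟩ : ∃ b, s[j]? = some b := ⟨s[j], List.getElem?_eq_getElem hjs⟩
      have hab : B a b := ⟨j, ha, hb⟩
      have hσab : Trm.subst σ a = Trm.subst σ b := hσB a b hab
      rw [ha, hb]
      simp only [Option.map_some]
      congr 1
      cases a with
      | const c =>
        cases b with
        | const c' =>
          simp only [Trm.subst] at hσab ⊢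
          exact hσab
        | var y =>
          have hG : Relation.EqvGen B (Trm.var y) (Trm.const c) :=
            (Relation.EqvGen.rel _ _ hab).symm _ _
          have hy : ∃ c', Relation.EqvGen B (Trm.var y) (Trm.const c') := ⟨c, hG⟩
          have hyc : σ y = Trm.const c := hσconst y c hG
          rw [hτdef]
          simp only [Trm.subst, dif_pos hy]
          rw [hyc]
      | var x =>
        cases b with
        | const c =>
          have hG : Relation.EqvGen B (Trm.var x) (Trm.const c) :=
            Relation.EqvGen.rel _ _ hab
          have hx : ∃ c', Relation.EqvGen B (Trm.var x) (Trm.const c') := ⟨c, hG⟩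
          have hxc : σ x = Trm.const c := hσconst x c hG
          rw [hτdef]
          simp only [Trm.subst, dif_pos hx]
          rw [hxc]
        | var y =>
          exact hτeq x y (Relation.EqvGen.rel _ _ hab)
    · have hjs : j ≥ s.length := hlen ▸ hj
      rw [List.getElem?_eq_none hj, List.getElem?_eq_none hjs]
  obtain ⟨δ, hδ⟩ := hmgu.2 τ hτuni
  -- σ identifies variables only within B-classes
  have hF1 : ∀ (x y z : V), σ x = σ y → σ x = Trm.var z →
      Relation.EqvGen B (Trm.var x) (Trm.var y) := by
    intro x y z hxy hz
    have hx : ¬ ∃ c, Relation.EqvGen B (Trm.var x) (Trm.const c) := by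
      rintro ⟨c, hc⟩
      rw [hσconst x c hc] at hz
      exact nomatch hz
    have hy : ¬ ∃ c, Relation.EqvGen B (Trm.var y) (Trm.const c) := by
      rintro ⟨c, hc⟩
      rw [hxy, hσconst y c hc] at hz
      exact nomatch hz
    have hτxy : τ x = τ y := by
      rw [← hδ x, ← hδ y, hxy]
    rw [hτdef] at hτxy
    simp only [dif_neg hx, dif_neg hy] at hτxy
    have h1 : Relation.EqvGen B (Trm.var x) (Quot.out (Quot.mk B (Trm.var x))) :=
      (hmkout _).symm _ _
    have h2 : Relation.EqvGen B (Quot.out (Quot.mk B (Trm.var y))) (Trm.var y) :=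
      hmkout _
    exact h1.trans _ _ _ (hτxy ▸ h2)
  -- endpoints of nontrivial equivalences occur in t or s
  set InP : Trm V K → Prop :=
    fun a => (∃ j : ℕ, t[j]? = some a) ∨ (∃ j : ℕ, s[j]? = some a) with hInPdef
  have hEnd : ∀ a b, Relation.EqvGen B a b → a = b ∨ (InP a ∧ InP b) := by
    intro a b h
    induction h with
    | rel a b h => exact Or.inr ⟨Or.inl ⟨h.choose, h.choose_spec.1⟩,
        Or.inr ⟨h.choose, h.choose_spec.2⟩⟩
    | refl a => exact Or.inl rfl
    | symm a b h ih => exact ih.elim (fun e => Or.inl e.symm) (fun e => Or.inr ⟨e.2, e.1⟩)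
    | trans a b c h1 h2 ih1 ih2 =>
      rcases ih1 with rfl | h1'
      · exact ih2
      · rcases ih2 with rfl | h2'
        · exact Or.inr h1'
        · exact Or.inr ⟨h1'.1, h2'.2⟩
  -- occurrence in t/s means occurrence in L/M
  have hInPvar : ∀ w : V, InP (Trm.var w) → L.hasVar w ∨ M.hasVar w := by
    intro w hw
    rcases hw with ⟨j, hj⟩ | ⟨j, hj⟩
    · exact Or.inl ⟨j + 1, hj⟩
    · exact Or.inr ⟨j + 1, hj⟩
  -- now the main argument
  intro u l₁' hm₁ l₂' hm₂ hu₁ hu₂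
  have hmem : ∀ l' ∈ insert (Lit.subst σ L) (Clause.subst σ C),
      ∃ l ∈ D, l' = Lit.subst σ l := by
    intro l' hl'
    rcases Finset.mem_insert.1 hl' with h | h
    · exact ⟨L, hLD, h⟩
    · obtain ⟨l, hl, rfl⟩ := Finset.mem_image.1 h
      exact ⟨l, hCD l hl, rfl⟩
  obtain ⟨l₁, hl₁D, rfl⟩ := hmem _ hm₁
  obtain ⟨l₂, hl₂D, rfl⟩ := hmem _ hm₂
  obtain ⟨j₁, hj₁⟩ := hu₁
  obtain ⟨w₁, hw₁, hσw₁⟩ := Lit.varAt_subst.1 hj₁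
  obtain ⟨j₂, hj₂⟩ := hu₂
  obtain ⟨w₂, hw₂, hσw₂⟩ := Lit.varAt_subst.1 hj₂
  by_cases hT : ∃ w : V, σ w = Trm.var u ∧ InP (Trm.var w)
  · -- touched case
    have hWInP : ∀ w : V, σ w = Trm.var u → InP (Trm.var w) := by
      intro w hw
      obtain ⟨wx, hwxσ, hwxP⟩ := hT
      have hG : Relation.EqvGen B (Trm.var w) (Trm.var wx) :=
        hF1 w wx u (hw.trans hwxσ.symm) hw
      rcases hEnd _ _ hG with he | he
      · exact (Trm.var.inj he) ▸ hwxP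
      · exact he.1
    have H1 : ∀ w : V, σ w = Trm.var u → ∀ l ∈ D, ∀ i, l.firstOccAt w i →
        ∀ j ≤ i, (Lit.subst σ l).argAt j = (Lit.subst σ L).argAt j := by
      intro w hw l hl i hfi j hj
      rcases hInPvar w (hWInP w hw) with hwL | hwM
      · obtain ⟨i', h₁, h₂, h₃⟩ := hq w l hl L hLD ⟨i, hfi.1⟩ hwL
        have hii : i = i' := Lit.firstOccAt_unique hfi h₁
        subst hii
        rw [Lit.argAt_subst, Lit.argAt_subst, h₃ j hj]
      · obtain ⟨i', h₁, h₂, h₃⟩ := hq w l hl M hMD ⟨i, hfi.1⟩ hwM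
        have hii : i = i' := Lit.firstOccAt_unique hfi h₁
        subst hii
        rw [Lit.argAt_subst, ← hMσ, Lit.argAt_subst, h₃ j hj]
    set F : Set ℕ :=
      {i | ∃ w : V, σ w = Trm.var u ∧ ∃ l ∈ D, l.firstOccAt w i} with hFdef
    obtain ⟨i₁, hi₁⟩ := Lit.exists_firstOccAt (⟨j₁, hw₁⟩ : l₁.hasVar w₁)
    have hFne : F.Nonempty := ⟨i₁, w₁, hσw₁, l₁, hl₁D, hi₁⟩
    set f : ℕ := sInf F with hfdef
    obtain ⟨w₀, hσw₀, l₀, hl₀D, hf₀⟩ := Nat.sInf_mem hFne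
    have hfle : ∀ i ∈ F, f ≤ i := fun i hi => Nat.sInf_le hi
    have hLf : (Lit.subst σ L).argAt f = some (Trm.var u) := by
      have hh := H1 w₀ hσw₀ l₀ hl₀D f hf₀ f le_rfl
      rw [← hh, Lit.argAt_subst, hf₀.1]
      simp [Trm.subst, hσw₀]
    have key : ∀ l ∈ D, ∀ w : V, σ w = Trm.var u → l.hasVar w →
        (Lit.subst σ l).firstOccAt u f ∧
        ∀ j ≤ f, (Lit.subst σ l).argAt j = (Lit.subst σ L).argAt j := by
      intro l hl w hw hvw
      obtain ⟨i, hi⟩ := Lit.exists_firstOccAt hvw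
      have hiF : i ∈ F := ⟨w, hw, l, hl, hi⟩
      have hfi : f ≤ i := hfle i hiF
      have hpre : ∀ j ≤ f, (Lit.subst σ l).argAt j = (Lit.subst σ L).argAt j :=
        fun j hj => H1 w hw l hl i hi j (hj.trans hfi)
      refine ⟨⟨?_, ?_⟩, hpre⟩
      · show (Lit.subst σ l).argAt f = some (Trm.var u)
        rw [hpre f le_rfl, hLf]
      · intro j hjv
        obtain ⟨w', hw', hσw'⟩ := Lit.varAt_subst.1 hjv
        obtain ⟨i', hi'⟩ := Lit.exists_firstOccAt (⟨j, hw'⟩ : l.hasVar w')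
        have hi'F : i' ∈ F := ⟨w', hσw', l, hl, hi'⟩
        exact (hfle i' hi'F).trans (hi'.2 j hw')
    obtain ⟨hfo₁, hpre₁⟩ := key l₁ hl₁D w₁ hσw₁ ⟨j₁, hw₁⟩
    obtain ⟨hfo₂, hpre₂⟩ := key l₂ hl₂D w₂ hσw₂ ⟨j₂, hw₂⟩
    exact ⟨f, hfo₁, hfo₂, fun j hj => (hpre₁ j hj).trans (hpre₂ j hj).symm⟩
  · -- untouched case : the class is a singleton {w₁}
    push_neg at hT
    have hsing : ∀ w : V, σ w = Trm.var u → w = w₁ := by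
      intro w hw
      have hG : Relation.EqvGen B (Trm.var w) (Trm.var w₁) :=
        hF1 w w₁ u (hw.trans hσw₁.symm) hw
      rcases hEnd _ _ hG with he | he
      · exact Trm.var.inj he
      · exact absurd he.1 (hT w hw)
    have hw21 : w₂ = w₁ := hsing w₂ hσw₂
    rw [hw21] at hw₂
    obtain ⟨i, h₁, h₂, h₃⟩ := hq w₁ l₁ hl₁D l₂ hl₂D ⟨j₁, hw₁⟩ ⟨j₂, hw₂⟩
    refine ⟨i, ⟨?_, ?_⟩, ⟨?_, ?_⟩, ?_⟩
    · exact Lit.varAt_subst.2 ⟨w₁, h₁.1, hσw₁⟩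
    · intro j hjv
      obtain ⟨w', hw', hσw'⟩ := Lit.varAt_subst.1 hjv
      rw [hsing w' hσw'] at hw'
      exact h₁.2 j hw'
    · exact Lit.varAt_subst.2 ⟨w₁, h₂.1, hσw₁⟩
    · intro j hjv
      obtain ⟨w', hw', hσw'⟩ := Lit.varAt_subst.1 hjv
      rw [hsing w' hσw'] at hw'
      exact h₂.2 j hw'
    · intro j hj
      rw [Lit.argAt_subst, Lit.argAt_subst, h₃ j hj]
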